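/- Assume additionally 0 ≤ S(x,t) ≤ S₀(x) for all x ∈ W and t ≥ 0, and let κ : ∂W × (0,∞) → ℝ be continuous such that the boundary condition ∂T/∂n(x,t) = κ(x,t) holds for all x ∈ ∂W and t > 0. Then B is differentiable on (0,∞) and, for every t > 0, B′(t) ≤ −α·B(t) + ε·∫_{∂W} κ(x,t)·(T(x,t)−T_a) dσ − ½·∫_{∂W} (n(x)·v(x,t))·(T(x,t)−T_a)² dσ + 2ε·(R₂/R₁)·∫_{∂W} (T(x,t)−T_a)² dσ. -/

import Mathlib

open Set MeasureTheory intervalIntegral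

/-- The shifted Arrhenius reaction-rate function with activation parameter `γ`. -/
noncomputable def rt (γ s : ℝ) : ℝ := if 0 < s then Real.exp (-γ / s) else 0

/-- The four-edge boundary integral `∫_{∂W} g dσ` over the boundary of the
rectangle `[a₁,b₁]×[a₂,b₂]`. -/
noncomputable def bInt (a₁ b₁ a₂ b₂ : ℝ) (g : ℝ → ℝ → ℝ) : ℝ :=
  (∫ y in a₂..b₂, g a₁ y) + (∫ y in a₂..b₂, g b₁ y) +
  (∫ x in a₁..b₁, g x a₂) + (∫ x in a₁..b₁, g x b₂)


lemma rt_nonneg (γ s : ℝ) : 0 ≤ rt γ s := by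
  unfold rt; split <;> positivity

lemma rt_cont {γ : ℝ} (hγ : 0 < γ) : Continuous (rt γ) := by
  rw [continuous_iff_continuousAt]
  intro s₀
  rcases lt_trichotomy s₀ 0 with h | h | h
  · have hev : ∀ᶠ s in nhds s₀, rt γ s = 0 := by
      filter_upwards [Iio_mem_nhds h] with s hs
      simp [rt, not_lt.2 (le_of_lt (mem_Iio.1 hs))]
    exact (continuousAt_const (y := (0:ℝ))).congr
      (by filter_upwards [hev] with s hs using hs.symm)
  · subst h
    have h0 : rt γ 0 = 0 := by simp [rt]
    unfold ContinuousAt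
    rw [h0]
    have key : Filter.Tendsto (rt γ) (nhdsWithin 0 (Iic 0) ⊔ nhdsWithin 0 (Ioi 0)) (nhds 0) := by
      rw [Filter.tendsto_sup]
      constructor
      · apply Filter.Tendsto.congr' _ tendsto_const_nhds
        filter_upwards [eventually_mem_nhdsWithin] with s hs
        simp [rt, not_lt.2 (mem_Iic.1 hs)]
      · have h1 : Filter.Tendsto (fun s : ℝ => -γ / s) (nhdsWithin 0 (Ioi 0)) Filter.atBot := by
          rw [show (fun s : ℝ => -γ / s) = fun s : ℝ => -(γ * s⁻¹) by funext s; ring]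
          exact Filter.tendsto_neg_atBot_iff.2 (tendsto_inv_nhdsGT_zero.const_mul_atTop hγ)
        have h2 := Real.tendsto_exp_atBot.comp h1
        apply Filter.Tendsto.congr' _ h2
        filter_upwards [eventually_mem_nhdsWithin] with s hs
        simp [rt, mem_Ioi.1 hs]
    rwa [nhdsLE_sup_nhdsGT] at key
  · have hev : ∀ᶠ s in nhds s₀, rt γ s = Real.exp (-γ / s) := by
      filter_upwards [Ioi_mem_nhds h] with s hs
      simp [rt, mem_Ioi.1 hs]
    have hce : ContinuousAt (fun s => Real.exp (-γ / s)) s₀ :=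
      (Real.continuous_exp.continuousAt).comp
        ((continuousAt_const.div continuousAt_id (ne_of_gt h)))
    exact hce.congr (by filter_upwards [hev] with s hs using hs.symm)

lemma rt_key {γ M S s : ℝ} (hγ : 0 < γ) (hS0 : 0 ≤ S) (hSM : S ≤ M) :
    s * (S * rt γ s) ≤ M * (Real.exp (-1) / γ) * s ^ 2 := by
  have hM : 0 ≤ M := hS0.trans hSM
  rcases le_or_gt s 0 with hs | hs
  · simp only [rt, if_neg (not_lt.2 hs)]
    have : s * (S * 0) = 0 := by ring
    rw [this]
    positivity
  · simp only [rt, if_pos hs]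
    have key : Real.exp (-γ / s) ≤ Real.exp (-1) * s / γ := by
      have h1 : γ / s ≤ Real.exp (γ / s - 1) := by
        have := Real.add_one_le_exp (γ / s - 1)
        linarith
      have h2 : Real.exp (-γ / s) * (γ / s) ≤ Real.exp (-1) := by
        calc Real.exp (-γ / s) * (γ / s) ≤ Real.exp (-γ / s) * Real.exp (γ / s - 1) := by
              apply mul_le_mul_of_nonneg_left h1 (Real.exp_pos _).le
          _ = Real.exp (-1) := by rw [← Real.exp_add]; ring_nf
      have h3 := mul_le_mul_of_nonneg_right h2 hs.le
      rw [le_div_iff₀ hγ]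
      calc Real.exp (-γ/s) * γ = Real.exp (-γ/s) * (γ/s) * s := by field_simp
        _ ≤ Real.exp (-1) * s := h3
    calc s * (S * Real.exp (-γ / s)) ≤ s * (M * (Real.exp (-1) * s / γ)) := by
          apply mul_le_mul_of_nonneg_left _ hs.le
          exact mul_le_mul hSM key (Real.exp_pos _).le hM
      _ = M * (Real.exp (-1) / γ) * s ^ 2 := by field_simp

section Helpers
variable {a₁ b₁ a₂ b₂ : ℝ}

lemma cont_slice_t {f : ℝ → ℝ → ℝ → ℝ} {A : Set (ℝ × ℝ)}
    (h : ContinuousOn (fun q : (ℝ × ℝ) × ℝ => f q.1.1 q.1.2 q.2) (A ×ˢ Ici (0:ℝ)))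
    {t : ℝ} (ht : 0 ≤ t) : ContinuousOn (fun p : ℝ × ℝ => f p.1 p.2 t) A :=
  h.comp ((continuous_id.prodMk continuous_const).continuousOn)
    (fun p hp => mem_prod.2 ⟨hp, ht⟩)

lemma cont_slice_x {f : ℝ → ℝ → ℝ} {s s' : Set ℝ}
    (h : ContinuousOn (fun p : ℝ × ℝ => f p.1 p.2) (s ×ˢ s')) {x : ℝ} (hx : x ∈ s) :
    ContinuousOn (fun y => f x y) s' :=
  h.comp ((continuous_const.prodMk continuous_id).continuousOn)
    (fun y hy => mem_prod.2 ⟨hx, hy⟩)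

lemma cont_slice_y {f : ℝ → ℝ → ℝ} {s s' : Set ℝ}
    (h : ContinuousOn (fun p : ℝ × ℝ => f p.1 p.2) (s ×ˢ s')) {y : ℝ} (hy : y ∈ s') :
    ContinuousOn (fun x => f x y) s :=
  h.comp ((continuous_id.prodMk continuous_const).continuousOn)
    (fun x hx => mem_prod.2 ⟨hx, hy⟩)

lemma ii_slice {f : ℝ → ℝ → ℝ} (h2 : a₂ ≤ b₂)
    (h : ContinuousOn (fun p : ℝ × ℝ => f p.1 p.2) (Icc a₁ b₁ ×ˢ Icc a₂ b₂))
    {x : ℝ} (hx : x ∈ Icc a₁ b₁) : IntervalIntegrable (fun y => f x y) volume a₂ b₂ :=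
  (cont_slice_x h hx).intervalIntegrable_of_Icc h2

lemma ii_slice_y {f : ℝ → ℝ → ℝ} (h1 : a₁ ≤ b₁)
    (h : ContinuousOn (fun p : ℝ × ℝ => f p.1 p.2) (Icc a₁ b₁ ×ˢ Icc a₂ b₂))
    {y : ℝ} (hy : y ∈ Icc a₂ b₂) : IntervalIntegrable (fun x => f x y) volume a₁ b₁ :=
  (cont_slice_y h hy).intervalIntegrable_of_Icc h1

lemma contParamInt {f : ℝ → ℝ → ℝ} (h2 : a₂ ≤ b₂)
    (hf : ContinuousOn (fun p : ℝ × ℝ => f p.1 p.2) (Icc a₁ b₁ ×ˢ Icc a₂ b₂)) :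
    ContinuousOn (fun x => ∫ y in a₂..b₂, f x y) (Icc a₁ b₁) := by
  obtain ⟨M, hM⟩ := (isCompact_Icc.prod isCompact_Icc).exists_bound_of_continuousOn hf
  have heq : ∀ x, (∫ y in a₂..b₂, f x y) = ∫ y, f x y ∂(volume.restrict (Ioc a₂ b₂)) :=
    fun x => intervalIntegral.integral_of_le h2
  simp only [heq]
  apply continuousOn_of_dominated (bound := fun _ => M)
  · intro x hx
    exact ((cont_slice_x hf hx).mono Ioc_subset_Icc_self).aestronglyMeasurable measurableSet_Ioc
  · intro x hx
    filter_upwards [ae_restrict_mem measurableSet_Ioc] with y hy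
    exact hM (x, y) (mem_prod.2 ⟨hx, Ioc_subset_Icc_self hy⟩)
  · exact integrable_const _
  · filter_upwards [ae_restrict_mem measurableSet_Ioc] with y hy
    exact cont_slice_y hf (Ioc_subset_Icc_self hy)

lemma ii_outer {f : ℝ → ℝ → ℝ} (h1 : a₁ ≤ b₁) (h2 : a₂ ≤ b₂)
    (hf : ContinuousOn (fun p : ℝ × ℝ => f p.1 p.2) (Icc a₁ b₁ ×ˢ Icc a₂ b₂)) :
    IntervalIntegrable (fun x => ∫ y in a₂..b₂, f x y) volume a₁ b₁ :=
  (contParamInt h2 hf).intervalIntegrable_of_Icc h1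

lemma swapInt {f : ℝ → ℝ → ℝ} (h1 : a₁ ≤ b₁) (h2 : a₂ ≤ b₂)
    (hf : ContinuousOn (fun p : ℝ × ℝ => f p.1 p.2) (Icc a₁ b₁ ×ˢ Icc a₂ b₂)) :
    (∫ x in a₁..b₁, ∫ y in a₂..b₂, f x y) = ∫ y in a₂..b₂, ∫ x in a₁..b₁, f x y := by
  have hint : Integrable (Function.uncurry f)
      ((volume.restrict (Ioc a₁ b₁)).prod (volume.restrict (Ioc a₂ b₂))) := by
    rw [Measure.prod_restrict, ← Measure.volume_eq_prod]
    exact ((hf.integrableOn_compact (isCompact_Icc.prod isCompact_Icc)).mono_set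
      (prod_mono Ioc_subset_Icc_self Ioc_subset_Icc_self))
  have := MeasureTheory.integral_integral_swap hint
  simpa only [intervalIntegral.integral_of_le h1, intervalIntegral.integral_of_le h2] using this

lemma mono2 (h1 : a₁ ≤ b₁) (h2 : a₂ ≤ b₂) {f g : ℝ → ℝ → ℝ}
    (hf : ContinuousOn (fun p : ℝ × ℝ => f p.1 p.2) (Icc a₁ b₁ ×ˢ Icc a₂ b₂))
    (hg : ContinuousOn (fun p : ℝ × ℝ => g p.1 p.2) (Icc a₁ b₁ ×ˢ Icc a₂ b₂))
    (hle : ∀ x ∈ Icc a₁ b₁, ∀ y ∈ Icc a₂ b₂, f x y ≤ g x y) :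
    (∫ x in a₁..b₁, ∫ y in a₂..b₂, f x y) ≤ ∫ x in a₁..b₁, ∫ y in a₂..b₂, g x y := by
  apply intervalIntegral.integral_mono_on h1 (ii_outer h1 h2 hf) (ii_outer h1 h2 hg)
  intro x hx
  exact intervalIntegral.integral_mono_on h2 (ii_slice h2 hf hx) (ii_slice h2 hg hx) (hle x hx)

lemma cmul2 (c : ℝ) (f : ℝ → ℝ → ℝ) :
    (∫ x in a₁..b₁, ∫ y in a₂..b₂, c * f x y) = c * ∫ x in a₁..b₁, ∫ y in a₂..b₂, f x y := by
  simp_rw [intervalIntegral.integral_const_mul]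

lemma add2 (h1 : a₁ ≤ b₁) (h2 : a₂ ≤ b₂) {f g : ℝ → ℝ → ℝ}
    (hf : ContinuousOn (fun p : ℝ × ℝ => f p.1 p.2) (Icc a₁ b₁ ×ˢ Icc a₂ b₂))
    (hg : ContinuousOn (fun p : ℝ × ℝ => g p.1 p.2) (Icc a₁ b₁ ×ˢ Icc a₂ b₂)) :
    (∫ x in a₁..b₁, ∫ y in a₂..b₂, (f x y + g x y))
      = (∫ x in a₁..b₁, ∫ y in a₂..b₂, f x y) + ∫ x in a₁..b₁, ∫ y in a₂..b₂, g x y := by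
  have hin : ∀ x ∈ uIcc a₁ b₁, (∫ y in a₂..b₂, (f x y + g x y))
      = (∫ y in a₂..b₂, f x y) + ∫ y in a₂..b₂, g x y := by
    intro x hx
    rw [uIcc_of_le h1] at hx
    exact intervalIntegral.integral_add (ii_slice h2 hf hx) (ii_slice h2 hg hx)
  rw [intervalIntegral.integral_congr hin]
  exact intervalIntegral.integral_add (ii_outer h1 h2 hf) (ii_outer h1 h2 hg)

lemma green_y (h1 : a₁ ≤ b₁) (h2 : a₂ ≤ b₂) {p p' : ℝ → ℝ → ℝ}
    (hd : ∀ x ∈ Icc a₁ b₁, ∀ y : ℝ, HasDerivAt (fun s => p x s) (p' x y) y)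
    (hc : ContinuousOn (fun q : ℝ × ℝ => p' q.1 q.2) (Icc a₁ b₁ ×ˢ Icc a₂ b₂))
    (hcb : IntervalIntegrable (fun x => p x b₂) volume a₁ b₁)
    (hca : IntervalIntegrable (fun x => p x a₂) volume a₁ b₁) :
    (∫ x in a₁..b₁, ∫ y in a₂..b₂, p' x y)
      = (∫ x in a₁..b₁, p x b₂) - ∫ x in a₁..b₁, p x a₂ := by
  rw [← intervalIntegral.integral_sub hcb hca]
  apply intervalIntegral.integral_congr
  intro x hx
  rw [uIcc_of_le h1] at hx
  exact intervalIntegral.integral_eq_sub_of_hasDerivAt (fun y _ => hd x hx y)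
    (ii_slice h2 hc hx)

lemma green_x (h1 : a₁ ≤ b₁) (h2 : a₂ ≤ b₂) {p p' : ℝ → ℝ → ℝ}
    (hd : ∀ y ∈ Icc a₂ b₂, ∀ x : ℝ, HasDerivAt (fun s => p s y) (p' x y) x)
    (hc : ContinuousOn (fun q : ℝ × ℝ => p' q.1 q.2) (Icc a₁ b₁ ×ˢ Icc a₂ b₂))
    (hcb : IntervalIntegrable (fun y => p b₁ y) volume a₂ b₂)
    (hca : IntervalIntegrable (fun y => p a₁ y) volume a₂ b₂) :
    (∫ x in a₁..b₁, ∫ y in a₂..b₂, p' x y)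
      = (∫ y in a₂..b₂, p b₁ y) - ∫ y in a₂..b₂, p a₁ y := by
  rw [swapInt h1 h2 hc, ← intervalIntegral.integral_sub hcb hca]
  apply intervalIntegral.integral_congr
  intro y hy
  rw [uIcc_of_le h2] at hy
  exact intervalIntegral.integral_eq_sub_of_hasDerivAt (fun x _ => hd y hy x)
    (ii_slice_y h1 hc hy)

end Helpers

set_option maxHeartbeats 1000000
section Deriv
variable {a₁ b₁ a₂ b₂ Ta : ℝ} {T Tt : ℝ → ℝ → ℝ → ℝ}


lemma cont_xslice {a₁ b₁ a₂ b₂ : ℝ} {f : ℝ → ℝ → ℝ → ℝ}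
    (h : ContinuousOn (fun q : (ℝ × ℝ) × ℝ => f q.1.1 q.1.2 q.2)
      ((Icc a₁ b₁ ×ˢ Icc a₂ b₂) ×ˢ Ici 0))
    {x t : ℝ} (hx : x ∈ Icc a₁ b₁) (ht : 0 ≤ t) :
    ContinuousOn (fun y => f x y t) (Icc a₂ b₂) :=
  h.comp (((continuous_const.prodMk continuous_id).prodMk continuous_const).continuousOn)
    (fun y hy => ⟨⟨hx, hy⟩, ht⟩)

lemma ball_subset_pos {t : ℝ} (ht : 0 < t) :
    Metric.ball t (t/2) ⊆ Icc (t/2) (t + t/2) := by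
  rw [Real.ball_eq_Ioo]
  have : t - t/2 = t/2 := by ring
  rw [this]
  exact Ioo_subset_Icc_self

lemma deriv_inner (h2 : a₂ ≤ b₂)
    (hTt : ∀ x y t, 0 < t → HasDerivAt (fun τ => T x y τ) (Tt x y t) t)
    (hcT : ContinuousOn (fun q : (ℝ × ℝ) × ℝ => T q.1.1 q.1.2 q.2)
      ((Icc a₁ b₁ ×ˢ Icc a₂ b₂) ×ˢ Ici 0))
    (hcTt : ContinuousOn (fun q : (ℝ × ℝ) × ℝ => Tt q.1.1 q.1.2 q.2)
      ((Icc a₁ b₁ ×ˢ Icc a₂ b₂) ×ˢ Ici 0))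
    {x : ℝ} (hx : x ∈ Icc a₁ b₁) {t : ℝ} (ht : 0 < t) :
    HasDerivAt (fun τ => ∫ y in a₂..b₂, (T x y τ - Ta)^2)
      (∫ y in a₂..b₂, 2*((T x y t - Ta) * Tt x y t)) t := by
  have hIci : (Icc a₁ b₁ ×ˢ Icc a₂ b₂) ×ˢ Icc (t/2) (t + t/2)
      ⊆ (Icc a₁ b₁ ×ˢ Icc a₂ b₂) ×ˢ Ici (0:ℝ) :=
    prod_mono_right (fun τ hτ => le_trans (by positivity) hτ.1)
  obtain ⟨M, hM⟩ := (((isCompact_Icc.prod isCompact_Icc).prod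
      isCompact_Icc)).exists_bound_of_continuousOn
    (f := fun q : (ℝ×ℝ)×ℝ => 2*((T q.1.1 q.1.2 q.2 - Ta) * Tt q.1.1 q.1.2 q.2))
    (((continuousOn_const.mul ((hcT.sub continuousOn_const).mul hcTt))).mono hIci)
  have key := intervalIntegral.hasDerivAt_integral_of_dominated_loc_of_deriv_le
    (F := fun τ y => (T x y τ - Ta)^2) (F' := fun τ y => 2*((T x y τ - Ta) * Tt x y τ))
    (x₀ := t) (s := Metric.ball t (t/2)) (bound := fun _ => M) (a := a₂) (b := b₂) (μ := volume)
    (Metric.ball_mem_nhds t (half_pos ht)) ?_ ?_ ?_ ?_ ?_ ?_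
  · exact key.2
  · filter_upwards [Ioi_mem_nhds ht] with τ hτ
    rw [uIoc_of_le h2]
    have c1 : ContinuousOn (fun y => (T x y τ - Ta)^2) (Icc a₂ b₂) :=
      ((cont_xslice hcT hx (le_of_lt hτ)).sub continuousOn_const).pow 2
    exact (c1.mono Ioc_subset_Icc_self).aestronglyMeasurable measurableSet_Ioc
  · have c1 : ContinuousOn (fun y => (T x y t - Ta)^2) (Icc a₂ b₂) :=
      ((cont_xslice hcT hx ht.le).sub continuousOn_const).pow 2
    exact c1.intervalIntegrable_of_Icc h2
  · rw [uIoc_of_le h2]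
    have c1 : ContinuousOn (fun y => 2*((T x y t - Ta) * Tt x y t)) (Icc a₂ b₂) :=
      continuousOn_const.mul (((cont_xslice hcT hx ht.le).sub
        continuousOn_const).mul (cont_xslice hcTt hx ht.le))
    exact (c1.mono Ioc_subset_Icc_self).aestronglyMeasurable measurableSet_Ioc
  · apply Filter.Eventually.of_forall
    intro y hy τ hτ
    rw [uIoc_of_le h2] at hy
    exact hM ((x, y), τ) ⟨⟨hx, Ioc_subset_Icc_self hy⟩, ball_subset_pos ht hτ⟩
  · exact intervalIntegrable_const
  · apply Filter.Eventually.of_forall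
    intro y _ τ hτ
    have hτpos : 0 < τ := lt_of_lt_of_le (half_pos ht) (ball_subset_pos ht hτ).1
    have h := ((hTt x y τ hτpos).sub_const Ta).fun_pow 2
    exact h.congr_deriv (by push_cast; ring)

lemma deriv_outer (h1 : a₁ ≤ b₁) (h2 : a₂ ≤ b₂)
    (hTt : ∀ x y t, 0 < t → HasDerivAt (fun τ => T x y τ) (Tt x y t) t)
    (hcT : ContinuousOn (fun q : (ℝ × ℝ) × ℝ => T q.1.1 q.1.2 q.2)
      ((Icc a₁ b₁ ×ˢ Icc a₂ b₂) ×ˢ Ici 0))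
    (hcTt : ContinuousOn (fun q : (ℝ × ℝ) × ℝ => Tt q.1.1 q.1.2 q.2)
      ((Icc a₁ b₁ ×ˢ Icc a₂ b₂) ×ˢ Ici 0))
    {t : ℝ} (ht : 0 < t) :
    HasDerivAt (fun τ => ∫ x in a₁..b₁, ∫ y in a₂..b₂, (T x y τ - Ta)^2)
      (∫ x in a₁..b₁, ∫ y in a₂..b₂, 2*((T x y t - Ta) * Tt x y t)) t := by
  have hIci : (Icc a₁ b₁ ×ˢ Icc a₂ b₂) ×ˢ Icc (t/2) (t + t/2)
      ⊆ (Icc a₁ b₁ ×ˢ Icc a₂ b₂) ×ˢ Ici (0:ℝ) :=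
    prod_mono_right (fun τ hτ => le_trans (by positivity) hτ.1)
  obtain ⟨M, hM⟩ := (((isCompact_Icc.prod isCompact_Icc).prod
      isCompact_Icc)).exists_bound_of_continuousOn
    (f := fun q : (ℝ×ℝ)×ℝ => 2*((T q.1.1 q.1.2 q.2 - Ta) * Tt q.1.1 q.1.2 q.2))
    (((continuousOn_const.mul ((hcT.sub continuousOn_const).mul hcTt))).mono hIci)
  have key := intervalIntegral.hasDerivAt_integral_of_dominated_loc_of_deriv_le
    (F := fun τ x => ∫ y in a₂..b₂, (T x y τ - Ta)^2)
    (F' := fun τ x => ∫ y in a₂..b₂, 2*((T x y τ - Ta) * Tt x y τ))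
    (x₀ := t) (s := Metric.ball t (t/2)) (bound := fun _ => |M| * |b₂ - a₂|) (a := a₁) (b := b₁) (μ := volume)
    (Metric.ball_mem_nhds t (half_pos ht)) ?_ ?_ ?_ ?_ ?_ ?_
  · exact key.2
  · filter_upwards [Ioi_mem_nhds ht] with τ hτ
    rw [uIoc_of_le h1]
    have c1 : ContinuousOn (fun p : ℝ × ℝ => (T p.1 p.2 τ - Ta)^2) (Icc a₁ b₁ ×ˢ Icc a₂ b₂) :=
      ((cont_slice_t hcT (le_of_lt hτ)).sub continuousOn_const).pow 2
    exact ((contParamInt h2 c1).mono Ioc_subset_Icc_self).aestronglyMeasurable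
      measurableSet_Ioc
  · have c1 : ContinuousOn (fun p : ℝ × ℝ => (T p.1 p.2 t - Ta)^2) (Icc a₁ b₁ ×ˢ Icc a₂ b₂) :=
      ((cont_slice_t hcT ht.le).sub continuousOn_const).pow 2
    exact ii_outer h1 h2 c1
  · rw [uIoc_of_le h1]
    have c1 : ContinuousOn (fun p : ℝ × ℝ => 2*((T p.1 p.2 t - Ta) * Tt p.1 p.2 t))
        (Icc a₁ b₁ ×ˢ Icc a₂ b₂) :=
      continuousOn_const.mul (((cont_slice_t hcT ht.le).sub
        continuousOn_const).mul (cont_slice_t hcTt ht.le))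
    exact ((contParamInt h2 c1).mono Ioc_subset_Icc_self).aestronglyMeasurable measurableSet_Ioc
  · apply Filter.Eventually.of_forall
    intro x hx τ hτ
    rw [uIoc_of_le h1] at hx
    apply intervalIntegral.norm_integral_le_of_norm_le_const
    intro y hy
    rw [uIoc_of_le h2] at hy
    exact le_trans (hM ((x, y), τ) ⟨⟨Ioc_subset_Icc_self hx, Ioc_subset_Icc_self hy⟩,
      ball_subset_pos ht hτ⟩) (le_abs_self M)
  · exact intervalIntegrable_const
  · apply Filter.Eventually.of_forall
    intro x hx τ hτ
    rw [uIoc_of_le h1] at hx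
    have hτpos : 0 < τ := lt_of_lt_of_le (half_pos ht) (ball_subset_pos ht hτ).1
    exact deriv_inner h2 hTt hcT hcTt (Ioc_subset_Icc_self hx) hτpos

end Deriv

lemma sqrt_bd (c d : ℝ) : c ≤ Real.sqrt (c^2 + d^2) :=
  le_trans (le_abs_self c) (by
    rw [← Real.sqrt_sq_eq_abs]
    exact Real.sqrt_le_sqrt (by nlinarith [sq_nonneg d]))

lemma neg2 {a₁ b₁ a₂ b₂ : ℝ} (f : ℝ → ℝ → ℝ) :
    (∫ x in a₁..b₁, ∫ y in a₂..b₂, -(f x y)) = -∫ x in a₁..b₁, ∫ y in a₂..b₂, f x y := by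
  simp_rw [intervalIntegral.integral_neg]

set_option maxHeartbeats 2000000 in
lemma key_ineq (a₁ b₁ a₂ b₂ ε A C γ Ta : ℝ)
    (ha : a₁ < b₁) (hb : a₂ < b₂) (hε : 0 < ε) (hA : 0 < A) (hC : 0 < C) (hγ : 0 < γ)
    (T S v₁ v₂ T₁ T₂ T₁₁ T₂₂ Tt dv₁ dv₂ : ℝ → ℝ → ℝ → ℝ) (S₀ : ℝ → ℝ → ℝ)
    (hT₁ : ∀ x y t, 0 ≤ t → HasDerivAt (fun s => T s y t) (T₁ x y t) x)
    (hT₂ : ∀ x y t, 0 ≤ t → HasDerivAt (fun s => T x s t) (T₂ x y t) y)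
    (hT₁₁ : ∀ x y t, 0 ≤ t → HasDerivAt (fun s => T₁ s y t) (T₁₁ x y t) x)
    (hT₂₂ : ∀ x y t, 0 ≤ t → HasDerivAt (fun s => T₂ x s t) (T₂₂ x y t) y)
    (hdv₁ : ∀ x y t, 0 ≤ t → HasDerivAt (fun s => v₁ s y t) (dv₁ x y t) x)
    (hdv₂ : ∀ x y t, 0 ≤ t → HasDerivAt (fun s => v₂ x s t) (dv₂ x y t) y)
    (hcont : ∀ f ∈ [T, S, v₁, v₂, T₁, T₂, T₁₁, T₂₂, Tt, dv₁, dv₂],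
      ContinuousOn (fun q : (ℝ × ℝ) × ℝ => f q.1.1 q.1.2 q.2)
        ((Icc a₁ b₁ ×ˢ Icc a₂ b₂) ×ˢ Ici (0 : ℝ)))
    (hPDE : ∀ x y, (x, y) ∈ Icc a₁ b₁ ×ˢ Icc a₂ b₂ → ∀ t, 0 < t →
      Tt x y t = ε * (T₁₁ x y t + T₂₂ x y t)
        - (v₁ x y t * T₁ x y t + v₂ x y t * T₂ x y t)
        + A * (S x y t * rt γ (T x y t - Ta) - C * (T x y t - Ta)))
    (hS0b : ∀ x y, (x, y) ∈ Icc a₁ b₁ ×ˢ Icc a₂ b₂ → 0 ≤ S₀ x y ∧ S₀ x y ≤ 1)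
    (hSb : ∀ x y, (x, y) ∈ Icc a₁ b₁ ×ˢ Icc a₂ b₂ → ∀ t, 0 ≤ t →
      0 ≤ S x y t ∧ S x y t ≤ S₀ x y)
    (R₁ R₂ Vs MS₀ α : ℝ)
    (hR₁ : R₁ = sSup ((fun p : ℝ × ℝ => p.1 ^ 2 + p.2 ^ 2) '' (Icc a₁ b₁ ×ˢ Icc a₂ b₂)))
    (hR₂ : R₂ = sSup ((fun p : ℝ × ℝ => Real.sqrt (p.1 ^ 2 + p.2 ^ 2)) ''
      ((({a₁, b₁} : Set ℝ) ×ˢ Icc a₂ b₂) ∪ (Icc a₁ b₁ ×ˢ ({a₂, b₂} : Set ℝ)))))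
    (hVs : Vs = sSup ((fun q : (ℝ × ℝ) × ℝ =>
      |dv₁ q.1.1 q.1.2 q.2 + dv₂ q.1.1 q.1.2 q.2|) '' ((Icc a₁ b₁ ×ˢ Icc a₂ b₂) ×ˢ Ioi (0 : ℝ))))
    (hVbdd : BddAbove ((fun q : (ℝ × ℝ) × ℝ =>
      |dv₁ q.1.1 q.1.2 q.2 + dv₂ q.1.1 q.1.2 q.2|) '' ((Icc a₁ b₁ ×ˢ Icc a₂ b₂) ×ˢ Ioi (0 : ℝ))))
    (hMS₀ : MS₀ = sSup ((fun p : ℝ × ℝ => S₀ p.1 p.2) '' (Icc a₁ b₁ ×ˢ Icc a₂ b₂)))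
    (hα : α = 2 * A * C + 2 * ε / R₁ - Vs - (2 * A * Real.exp (-1) / γ) * MS₀)
    (κ : ℝ → ℝ → ℝ → ℝ)
    (hbcl : ∀ y ∈ Icc a₂ b₂, ∀ t, 0 < t → -T₁ a₁ y t = κ a₁ y t)
    (hbcr : ∀ y ∈ Icc a₂ b₂, ∀ t, 0 < t → T₁ b₁ y t = κ b₁ y t)
    (hbcb : ∀ x ∈ Icc a₁ b₁, ∀ t, 0 < t → -T₂ x a₂ t = κ x a₂ t)
    (hbct : ∀ x ∈ Icc a₁ b₁, ∀ t, 0 < t → T₂ x b₂ t = κ x b₂ t)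
    (t : ℝ) (ht : 0 < t) :
    (∫ x in a₁..b₁, ∫ y in a₂..b₂, (T x y t - Ta) * Tt x y t)
      ≤ -α * (1 / 2 * ∫ x in a₁..b₁, ∫ y in a₂..b₂, (T x y t - Ta) ^ 2)
        + ε * bInt a₁ b₁ a₂ b₂ (fun x y => κ x y t * (T x y t - Ta))
        - 1 / 2 * ((∫ y in a₂..b₂, v₁ b₁ y t * (T b₁ y t - Ta) ^ 2)
            - (∫ y in a₂..b₂, v₁ a₁ y t * (T a₁ y t - Ta) ^ 2)
            + (∫ x in a₁..b₁, v₂ x b₂ t * (T x b₂ t - Ta) ^ 2)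
            - (∫ x in a₁..b₁, v₂ x a₂ t * (T x a₂ t - Ta) ^ 2))
        + 2 * ε * (R₂ / R₁) * bInt a₁ b₁ a₂ b₂ (fun x y => (T x y t - Ta) ^ 2) := by
  have h1 : a₁ ≤ b₁ := ha.le
  have h2 : a₂ ≤ b₂ := hb.le
  have ht0 : (0:ℝ) ≤ t := ht.le
  have ma1 : a₁ ∈ Icc a₁ b₁ := left_mem_Icc.2 h1
  have mb1 : b₁ ∈ Icc a₁ b₁ := right_mem_Icc.2 h1
  have ma2 : a₂ ∈ Icc a₂ b₂ := left_mem_Icc.2 h2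
  have mb2 : b₂ ∈ Icc a₂ b₂ := right_mem_Icc.2 h2
  -- continuity of slices at time t
  have cT : ContinuousOn (fun p : ℝ × ℝ => T p.1 p.2 t) (Icc a₁ b₁ ×ˢ Icc a₂ b₂) :=
    cont_slice_t (hcont T (by simp)) ht0
  have cS : ContinuousOn (fun p : ℝ × ℝ => S p.1 p.2 t) (Icc a₁ b₁ ×ˢ Icc a₂ b₂) :=
    cont_slice_t (hcont S (by simp)) ht0
  have cv1 : ContinuousOn (fun p : ℝ × ℝ => v₁ p.1 p.2 t) (Icc a₁ b₁ ×ˢ Icc a₂ b₂) :=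
    cont_slice_t (hcont v₁ (by simp)) ht0
  have cv2 : ContinuousOn (fun p : ℝ × ℝ => v₂ p.1 p.2 t) (Icc a₁ b₁ ×ˢ Icc a₂ b₂) :=
    cont_slice_t (hcont v₂ (by simp)) ht0
  have cT1 : ContinuousOn (fun p : ℝ × ℝ => T₁ p.1 p.2 t) (Icc a₁ b₁ ×ˢ Icc a₂ b₂) :=
    cont_slice_t (hcont T₁ (by simp)) ht0
  have cT2 : ContinuousOn (fun p : ℝ × ℝ => T₂ p.1 p.2 t) (Icc a₁ b₁ ×ˢ Icc a₂ b₂) :=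
    cont_slice_t (hcont T₂ (by simp)) ht0
  have cT11 : ContinuousOn (fun p : ℝ × ℝ => T₁₁ p.1 p.2 t) (Icc a₁ b₁ ×ˢ Icc a₂ b₂) :=
    cont_slice_t (hcont T₁₁ (by simp)) ht0
  have cT22 : ContinuousOn (fun p : ℝ × ℝ => T₂₂ p.1 p.2 t) (Icc a₁ b₁ ×ˢ Icc a₂ b₂) :=
    cont_slice_t (hcont T₂₂ (by simp)) ht0
  have cdv1 : ContinuousOn (fun p : ℝ × ℝ => dv₁ p.1 p.2 t) (Icc a₁ b₁ ×ˢ Icc a₂ b₂) :=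
    cont_slice_t (hcont dv₁ (by simp)) ht0
  have cdv2 : ContinuousOn (fun p : ℝ × ℝ => dv₂ p.1 p.2 t) (Icc a₁ b₁ ×ˢ Icc a₂ b₂) :=
    cont_slice_t (hcont dv₂ (by simp)) ht0
  have cu : ContinuousOn (fun p : ℝ × ℝ => T p.1 p.2 t - Ta) (Icc a₁ b₁ ×ˢ Icc a₂ b₂) :=
    cT.sub continuousOn_const
  have crt : ContinuousOn (fun p : ℝ × ℝ => rt γ (T p.1 p.2 t - Ta)) (Icc a₁ b₁ ×ˢ Icc a₂ b₂) :=
    (rt_cont hγ).comp_continuousOn cu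
  -- edge slice continuity
  have cTxb2 : ContinuousOn (fun x => T x b₂ t) (Icc a₁ b₁) := cont_slice_y (f := fun a b => T a b t) cT mb2
  have cTxa2 : ContinuousOn (fun x => T x a₂ t) (Icc a₁ b₁) := cont_slice_y (f := fun a b => T a b t) cT ma2
  have cT2xb2 : ContinuousOn (fun x => T₂ x b₂ t) (Icc a₁ b₁) := cont_slice_y (f := fun a b => T₂ a b t) cT2 mb2
  have cT2xa2 : ContinuousOn (fun x => T₂ x a₂ t) (Icc a₁ b₁) := cont_slice_y (f := fun a b => T₂ a b t) cT2 ma2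
  have cv2xb2 : ContinuousOn (fun x => v₂ x b₂ t) (Icc a₁ b₁) := cont_slice_y (f := fun a b => v₂ a b t) cv2 mb2
  have cv2xa2 : ContinuousOn (fun x => v₂ x a₂ t) (Icc a₁ b₁) := cont_slice_y (f := fun a b => v₂ a b t) cv2 ma2
  have cTyb1 : ContinuousOn (fun y => T b₁ y t) (Icc a₂ b₂) := cont_slice_x (f := fun a b => T a b t) cT mb1
  have cTya1 : ContinuousOn (fun y => T a₁ y t) (Icc a₂ b₂) := cont_slice_x (f := fun a b => T a b t) cT ma1
  have cT1yb1 : ContinuousOn (fun y => T₁ b₁ y t) (Icc a₂ b₂) := cont_slice_x (f := fun a b => T₁ a b t) cT1 mb1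
  have cT1ya1 : ContinuousOn (fun y => T₁ a₁ y t) (Icc a₂ b₂) := cont_slice_x (f := fun a b => T₁ a b t) cT1 ma1
  have cv1yb1 : ContinuousOn (fun y => v₁ b₁ y t) (Icc a₂ b₂) := cont_slice_x (f := fun a b => v₁ a b t) cv1 mb1
  have cv1ya1 : ContinuousOn (fun y => v₁ a₁ y t) (Icc a₂ b₂) := cont_slice_x (f := fun a b => v₁ a b t) cv1 ma1
  -- facts about the constants
  have hR₁bdd : BddAbove ((fun p : ℝ × ℝ => p.1 ^ 2 + p.2 ^ 2) '' (Icc a₁ b₁ ×ˢ Icc a₂ b₂)) :=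
    ((isCompact_Icc.prod isCompact_Icc).image_of_continuousOn
      (((continuous_fst.pow 2).add (continuous_snd.pow 2)).continuousOn)).bddAbove
  have hR₁le : ∀ p : ℝ × ℝ, p ∈ Icc a₁ b₁ ×ˢ Icc a₂ b₂ → p.1 ^ 2 + p.2 ^ 2 ≤ R₁ := by
    intro p hp; rw [hR₁]; exact le_csSup hR₁bdd ⟨p, hp, rfl⟩
  have hR₁pos : 0 < R₁ := by
    rcases eq_or_ne b₁ 0 with h0 | h0
    · have ha₁ : a₁ < 0 := h0 ▸ ha
      have hp := hR₁le (a₁, a₂) ⟨ma1, ma2⟩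
      nlinarith [sq_nonneg a₂, mul_pos (neg_pos.2 ha₁) (neg_pos.2 ha₁)]
    · have hp := hR₁le (b₁, a₂) ⟨mb1, ma2⟩
      have hb2 : 0 < b₁ ^ 2 := by positivity
      nlinarith [sq_nonneg a₂]
  have hR₁ne : R₁ ≠ 0 := ne_of_gt hR₁pos
  have hγne : γ ≠ 0 := ne_of_gt hγ
  have hR₂bdd : BddAbove ((fun p : ℝ × ℝ => Real.sqrt (p.1 ^ 2 + p.2 ^ 2)) ''
      ((({a₁, b₁} : Set ℝ) ×ˢ Icc a₂ b₂) ∪ (Icc a₁ b₁ ×ˢ ({a₂, b₂} : Set ℝ)))) := by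
    have hcomp : IsCompact ((({a₁, b₁} : Set ℝ) ×ˢ Icc a₂ b₂)
        ∪ (Icc a₁ b₁ ×ˢ ({a₂, b₂} : Set ℝ))) :=
      ((((Set.finite_singleton b₁).insert a₁).isCompact).prod isCompact_Icc).union
        (isCompact_Icc.prod (((Set.finite_singleton b₂).insert a₂).isCompact))
    exact (hcomp.image_of_continuousOn
      ((Real.continuous_sqrt.comp
        ((continuous_fst.pow 2).add (continuous_snd.pow 2))).continuousOn)).bddAbove
  have hR₂le : ∀ p : ℝ × ℝ, p ∈ ((({a₁, b₁} : Set ℝ) ×ˢ Icc a₂ b₂)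
      ∪ (Icc a₁ b₁ ×ˢ ({a₂, b₂} : Set ℝ))) → Real.sqrt (p.1 ^ 2 + p.2 ^ 2) ≤ R₂ := by
    intro p hp; rw [hR₂]; exact le_csSup hR₂bdd ⟨p, hp, rfl⟩
  have hb₁R : b₁ ≤ R₂ :=
    (sqrt_bd b₁ a₂).trans (hR₂le (b₁, a₂) (Or.inl ⟨by simp, ma2⟩))
  have ha₁R : -a₁ ≤ R₂ := by
    have h := sqrt_bd (-a₁) a₂
    rw [show (-a₁ : ℝ) ^ 2 + a₂ ^ 2 = a₁ ^ 2 + a₂ ^ 2 by ring] at h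
    exact h.trans (hR₂le (a₁, a₂) (Or.inl ⟨by simp, ma2⟩))
  have hb₂R : b₂ ≤ R₂ := by
    have h := sqrt_bd b₂ a₁
    rw [show (b₂ : ℝ) ^ 2 + a₁ ^ 2 = a₁ ^ 2 + b₂ ^ 2 by ring] at h
    exact h.trans (hR₂le (a₁, b₂) (Or.inr ⟨ma1, by simp⟩))
  have ha₂R : -a₂ ≤ R₂ := by
    have h := sqrt_bd (-a₂) a₁
    rw [show (-a₂ : ℝ) ^ 2 + a₁ ^ 2 = a₁ ^ 2 + a₂ ^ 2 by ring] at h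
    exact h.trans (hR₂le (a₁, a₂) (Or.inr ⟨ma1, by simp⟩))
  have hR₂0 : 0 ≤ R₂ :=
    le_trans (Real.sqrt_nonneg _) (hR₂le (a₁, a₂) (Or.inl ⟨by simp, ma2⟩))
  have hVle : ∀ x y, (x, y) ∈ Icc a₁ b₁ ×ˢ Icc a₂ b₂ → dv₁ x y t + dv₂ x y t ≤ Vs := by
    intro x y hxy
    rw [hVs]
    exact le_trans (le_abs_self _) (le_csSup hVbdd ⟨((x, y), t), ⟨hxy, ht⟩, rfl⟩)
  have hMbdd : BddAbove ((fun p : ℝ × ℝ => S₀ p.1 p.2) '' (Icc a₁ b₁ ×ˢ Icc a₂ b₂)) :=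
    ⟨1, by rintro _ ⟨p, hp, rfl⟩; exact (hS0b p.1 p.2 hp).2⟩
  have hSle : ∀ x y, (x, y) ∈ Icc a₁ b₁ ×ˢ Icc a₂ b₂ → S x y t ≤ MS₀ := by
    intro x y hxy
    refine ((hSb x y hxy t ht0).2).trans ?_
    rw [hMS₀]
    exact le_csSup hMbdd ⟨(x, y), hxy, rfl⟩
  -- Green identities
  have hJ1 : (∫ x in a₁..b₁, ∫ y in a₂..b₂,
        (T₂ x y t * T₂ x y t + (T x y t - Ta) * T₂₂ x y t))
      = (∫ x in a₁..b₁, (T x b₂ t - Ta) * T₂ x b₂ t)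
        - ∫ x in a₁..b₁, (T x a₂ t - Ta) * T₂ x a₂ t := by
    apply green_y h1 h2 (p := fun x y => (T x y t - Ta) * T₂ x y t)
      (p' := fun x y => T₂ x y t * T₂ x y t + (T x y t - Ta) * T₂₂ x y t)
    · intro x hx y
      exact ((hT₂ x y t ht0).sub_const Ta).mul (hT₂₂ x y t ht0)
    · exact (cT2.mul cT2).add (cu.mul cT22)
    · exact ((cTxb2.sub continuousOn_const).mul cT2xb2).intervalIntegrable_of_Icc h1
    · exact ((cTxa2.sub continuousOn_const).mul cT2xa2).intervalIntegrable_of_Icc h1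
  have hJ1κ : (∫ x in a₁..b₁, ∫ y in a₂..b₂,
        (T₂ x y t * T₂ x y t + (T x y t - Ta) * T₂₂ x y t))
      = (∫ x in a₁..b₁, κ x b₂ t * (T x b₂ t - Ta))
        + ∫ x in a₁..b₁, κ x a₂ t * (T x a₂ t - Ta) := by
    have e1 : (∫ x in a₁..b₁, (T x b₂ t - Ta) * T₂ x b₂ t)
        = ∫ x in a₁..b₁, κ x b₂ t * (T x b₂ t - Ta) := by
      apply intervalIntegral.integral_congr
      intro x hx
      rw [uIcc_of_le h1] at hx
      dsimp only
      rw [← hbct x hx t ht]; ring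
    have e2 : (∫ x in a₁..b₁, (T x a₂ t - Ta) * T₂ x a₂ t)
        = -∫ x in a₁..b₁, κ x a₂ t * (T x a₂ t - Ta) := by
      rw [← intervalIntegral.integral_neg]
      apply intervalIntegral.integral_congr
      intro x hx
      rw [uIcc_of_le h1] at hx
      dsimp only
      rw [← hbcb x hx t ht]; ring
    rw [hJ1, e1, e2]; ring
  have hJ2 : (∫ x in a₁..b₁, ∫ y in a₂..b₂,
        (T₁ x y t * T₁ x y t + (T x y t - Ta) * T₁₁ x y t))
      = (∫ y in a₂..b₂, (T b₁ y t - Ta) * T₁ b₁ y t)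
        - ∫ y in a₂..b₂, (T a₁ y t - Ta) * T₁ a₁ y t := by
    apply green_x h1 h2 (p := fun x y => (T x y t - Ta) * T₁ x y t)
      (p' := fun x y => T₁ x y t * T₁ x y t + (T x y t - Ta) * T₁₁ x y t)
    · intro y hy x
      exact ((hT₁ x y t ht0).sub_const Ta).mul (hT₁₁ x y t ht0)
    · exact (cT1.mul cT1).add (cu.mul cT11)
    · exact ((cTyb1.sub continuousOn_const).mul cT1yb1).intervalIntegrable_of_Icc h2
    · exact ((cTya1.sub continuousOn_const).mul cT1ya1).intervalIntegrable_of_Icc h2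
  have hJ2κ : (∫ x in a₁..b₁, ∫ y in a₂..b₂,
        (T₁ x y t * T₁ x y t + (T x y t - Ta) * T₁₁ x y t))
      = (∫ y in a₂..b₂, κ b₁ y t * (T b₁ y t - Ta))
        + ∫ y in a₂..b₂, κ a₁ y t * (T a₁ y t - Ta) := by
    have e1 : (∫ y in a₂..b₂, (T b₁ y t - Ta) * T₁ b₁ y t)
        = ∫ y in a₂..b₂, κ b₁ y t * (T b₁ y t - Ta) := by
      apply intervalIntegral.integral_congr
      intro y hy
      rw [uIcc_of_le h2] at hy
      dsimp only
      rw [← hbcr y hy t ht]; ring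
    have e2 : (∫ y in a₂..b₂, (T a₁ y t - Ta) * T₁ a₁ y t)
        = -∫ y in a₂..b₂, κ a₁ y t * (T a₁ y t - Ta) := by
      rw [← intervalIntegral.integral_neg]
      apply intervalIntegral.integral_congr
      intro y hy
      rw [uIcc_of_le h2] at hy
      dsimp only
      rw [← hbcl y hy t ht]; ring
    rw [hJ2, e1, e2]; ring
  have hJ3 : (∫ x in a₁..b₁, ∫ y in a₂..b₂,
        (dv₂ x y t * (T x y t - Ta) ^ 2 + v₂ x y t * (2 * ((T x y t - Ta) * T₂ x y t))))
      = (∫ x in a₁..b₁, v₂ x b₂ t * (T x b₂ t - Ta) ^ 2)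
        - ∫ x in a₁..b₁, v₂ x a₂ t * (T x a₂ t - Ta) ^ 2 := by
    apply green_y h1 h2 (p := fun x y => v₂ x y t * (T x y t - Ta) ^ 2)
      (p' := fun x y => dv₂ x y t * (T x y t - Ta) ^ 2
        + v₂ x y t * (2 * ((T x y t - Ta) * T₂ x y t)))
    · intro x hx y
      have h := (hdv₂ x y t ht0).fun_mul (((hT₂ x y t ht0).sub_const Ta).fun_pow 2)
      exact h.congr_deriv (by push_cast; ring)
    · exact (cdv2.mul (cu.pow 2)).add (cv2.mul (continuousOn_const.mul (cu.mul cT2)))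
    · exact (cv2xb2.mul ((cTxb2.sub continuousOn_const).pow 2)).intervalIntegrable_of_Icc h1
    · exact (cv2xa2.mul ((cTxa2.sub continuousOn_const).pow 2)).intervalIntegrable_of_Icc h1
  have hJ4 : (∫ x in a₁..b₁, ∫ y in a₂..b₂,
        (dv₁ x y t * (T x y t - Ta) ^ 2 + v₁ x y t * (2 * ((T x y t - Ta) * T₁ x y t))))
      = (∫ y in a₂..b₂, v₁ b₁ y t * (T b₁ y t - Ta) ^ 2)
        - ∫ y in a₂..b₂, v₁ a₁ y t * (T a₁ y t - Ta) ^ 2 := by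
    apply green_x h1 h2 (p := fun x y => v₁ x y t * (T x y t - Ta) ^ 2)
      (p' := fun x y => dv₁ x y t * (T x y t - Ta) ^ 2
        + v₁ x y t * (2 * ((T x y t - Ta) * T₁ x y t)))
    · intro y hy x
      have h := (hdv₁ x y t ht0).fun_mul (((hT₁ x y t ht0).sub_const Ta).fun_pow 2)
      exact h.congr_deriv (by push_cast; ring)
    · exact (cdv1.mul (cu.pow 2)).add (cv1.mul (continuousOn_const.mul (cu.mul cT1)))
    · exact (cv1yb1.mul ((cTyb1.sub continuousOn_const).pow 2)).intervalIntegrable_of_Icc h2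
    · exact (cv1ya1.mul ((cTya1.sub continuousOn_const).pow 2)).intervalIntegrable_of_Icc h2
  have hGX : (∫ x in a₁..b₁, ∫ y in a₂..b₂,
        ((T x y t - Ta) ^ 2 + x * (2 * ((T x y t - Ta) * T₁ x y t))))
      = (∫ y in a₂..b₂, b₁ * (T b₁ y t - Ta) ^ 2)
        - ∫ y in a₂..b₂, a₁ * (T a₁ y t - Ta) ^ 2 := by
    apply green_x h1 h2 (p := fun x y => x * (T x y t - Ta) ^ 2)
      (p' := fun x y => (T x y t - Ta) ^ 2 + x * (2 * ((T x y t - Ta) * T₁ x y t)))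
    · intro y hy x
      have h := (hasDerivAt_id x).fun_mul (((hT₁ x y t ht0).sub_const Ta).fun_pow 2)
      exact h.congr_deriv (by simp only [id_eq]; push_cast; ring)
    · exact (cu.pow 2).add ((continuous_fst.continuousOn).mul
        (continuousOn_const.mul (cu.mul cT1)))
    · exact (continuousOn_const.mul ((cTyb1.sub continuousOn_const).pow 2)).intervalIntegrable_of_Icc h2
    · exact (continuousOn_const.mul ((cTya1.sub continuousOn_const).pow 2)).intervalIntegrable_of_Icc h2
  have hGY : (∫ x in a₁..b₁, ∫ y in a₂..b₂,
        ((T x y t - Ta) ^ 2 + y * (2 * ((T x y t - Ta) * T₂ x y t))))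
      = (∫ x in a₁..b₁, b₂ * (T x b₂ t - Ta) ^ 2)
        - ∫ x in a₁..b₁, a₂ * (T x a₂ t - Ta) ^ 2 := by
    apply green_y h1 h2 (p := fun x y => y * (T x y t - Ta) ^ 2)
      (p' := fun x y => (T x y t - Ta) ^ 2 + y * (2 * ((T x y t - Ta) * T₂ x y t)))
    · intro x hx y
      have h := (hasDerivAt_id y).fun_mul (((hT₂ x y t ht0).sub_const Ta).fun_pow 2)
      exact h.congr_deriv (by simp only [id_eq]; push_cast; ring)
    · exact (cu.pow 2).add ((continuous_snd.continuousOn).mul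
        (continuousOn_const.mul (cu.mul cT2)))
    · exact (continuousOn_const.mul ((cTxb2.sub continuousOn_const).pow 2)).intervalIntegrable_of_Icc h1
    · exact (continuousOn_const.mul ((cTxa2.sub continuousOn_const).pow 2)).intervalIntegrable_of_Icc h1
  -- continuity of composite integrands
  have cq1 : ContinuousOn (fun p : ℝ × ℝ => T₂ p.1 p.2 t * T₂ p.1 p.2 t
      + (T p.1 p.2 t - Ta) * T₂₂ p.1 p.2 t) (Icc a₁ b₁ ×ˢ Icc a₂ b₂) :=
    (cT2.mul cT2).add (cu.mul cT22)
  have cq2 : ContinuousOn (fun p : ℝ × ℝ => T₁ p.1 p.2 t * T₁ p.1 p.2 t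
      + (T p.1 p.2 t - Ta) * T₁₁ p.1 p.2 t) (Icc a₁ b₁ ×ˢ Icc a₂ b₂) :=
    (cT1.mul cT1).add (cu.mul cT11)
  have cq3 : ContinuousOn (fun p : ℝ × ℝ => dv₂ p.1 p.2 t * (T p.1 p.2 t - Ta) ^ 2
      + v₂ p.1 p.2 t * (2 * ((T p.1 p.2 t - Ta) * T₂ p.1 p.2 t))) (Icc a₁ b₁ ×ˢ Icc a₂ b₂) :=
    (cdv2.mul (cu.pow 2)).add (cv2.mul (continuousOn_const.mul (cu.mul cT2)))
  have cq4 : ContinuousOn (fun p : ℝ × ℝ => dv₁ p.1 p.2 t * (T p.1 p.2 t - Ta) ^ 2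
      + v₁ p.1 p.2 t * (2 * ((T p.1 p.2 t - Ta) * T₁ p.1 p.2 t))) (Icc a₁ b₁ ×ˢ Icc a₂ b₂) :=
    (cdv1.mul (cu.pow 2)).add (cv1.mul (continuousOn_const.mul (cu.mul cT1)))
  have cq7 : ContinuousOn (fun p : ℝ × ℝ => T₁ p.1 p.2 t ^ 2 + T₂ p.1 p.2 t ^ 2)
      (Icc a₁ b₁ ×ˢ Icc a₂ b₂) := (cT1.pow 2).add (cT2.pow 2)
  have cr2 : ContinuousOn (fun p : ℝ × ℝ => (1/2) * ((dv₁ p.1 p.2 t + dv₂ p.1 p.2 t)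
        * (T p.1 p.2 t - Ta) ^ 2)
      + (A * ((T p.1 p.2 t - Ta) * (S p.1 p.2 t * rt γ (T p.1 p.2 t - Ta)))
        + (-(A * C)) * (T p.1 p.2 t - Ta) ^ 2)) (Icc a₁ b₁ ×ˢ Icc a₂ b₂) :=
    (continuousOn_const.mul ((cdv1.add cdv2).mul (cu.pow 2))).add
      ((continuousOn_const.mul (cu.mul (cS.mul crt))).add (continuousOn_const.mul (cu.pow 2)))
  have crest2 : ContinuousOn (fun p : ℝ × ℝ => (-ε) * (T₁ p.1 p.2 t ^ 2 + T₂ p.1 p.2 t ^ 2)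
      + ((1/2) * ((dv₁ p.1 p.2 t + dv₂ p.1 p.2 t) * (T p.1 p.2 t - Ta) ^ 2)
      + (A * ((T p.1 p.2 t - Ta) * (S p.1 p.2 t * rt γ (T p.1 p.2 t - Ta)))
        + (-(A * C)) * (T p.1 p.2 t - Ta) ^ 2))) (Icc a₁ b₁ ×ˢ Icc a₂ b₂) :=
    (continuousOn_const.mul cq7).add cr2
  have crest1 : ContinuousOn (fun p : ℝ × ℝ =>
      (-(1/2)) * ((dv₂ p.1 p.2 t * (T p.1 p.2 t - Ta) ^ 2
          + v₂ p.1 p.2 t * (2 * ((T p.1 p.2 t - Ta) * T₂ p.1 p.2 t)))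
        + (dv₁ p.1 p.2 t * (T p.1 p.2 t - Ta) ^ 2
          + v₁ p.1 p.2 t * (2 * ((T p.1 p.2 t - Ta) * T₁ p.1 p.2 t))))
      + ((-ε) * (T₁ p.1 p.2 t ^ 2 + T₂ p.1 p.2 t ^ 2)
      + ((1/2) * ((dv₁ p.1 p.2 t + dv₂ p.1 p.2 t) * (T p.1 p.2 t - Ta) ^ 2)
      + (A * ((T p.1 p.2 t - Ta) * (S p.1 p.2 t * rt γ (T p.1 p.2 t - Ta)))
        + (-(A * C)) * (T p.1 p.2 t - Ta) ^ 2)))) (Icc a₁ b₁ ×ˢ Icc a₂ b₂) :=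
    (continuousOn_const.mul (cq3.add cq4)).add crest2
  -- rewrite the integrand using the PDE
  have hPDEq : (∫ x in a₁..b₁, ∫ y in a₂..b₂, (T x y t - Ta) * Tt x y t)
      = (∫ x in a₁..b₁, ∫ y in a₂..b₂, (ε * ((T₂ x y t * T₂ x y t + (T x y t - Ta) * T₂₂ x y t) + (T₁ x y t * T₁ x y t + (T x y t - Ta) * T₁₁ x y t)) + ((-(1/2)) * ((dv₂ x y t * (T x y t - Ta) ^ 2 + v₂ x y t * (2 * ((T x y t - Ta) * T₂ x y t))) + (dv₁ x y t * (T x y t - Ta) ^ 2 + v₁ x y t * (2 * ((T x y t - Ta) * T₁ x y t)))) + ((-ε) * (T₁ x y t ^ 2 + T₂ x y t ^ 2) + ((1/2) * ((dv₁ x y t + dv₂ x y t) * (T x y t - Ta) ^ 2) + (A * ((T x y t - Ta) * (S x y t * rt γ (T x y t - Ta))) + (-(A * C)) * (T x y t - Ta) ^ 2)))))) := by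
    apply intervalIntegral.integral_congr
    intro x hx
    rw [uIcc_of_le h1] at hx
    dsimp only
    apply intervalIntegral.integral_congr
    intro y hy
    rw [uIcc_of_le h2] at hy
    dsimp only
    rw [hPDE x y ⟨hx, hy⟩ t ht]
    ring
  -- split into pieces
  have s1 : (∫ x in a₁..b₁, ∫ y in a₂..b₂, (ε * ((T₂ x y t * T₂ x y t + (T x y t - Ta) * T₂₂ x y t) + (T₁ x y t * T₁ x y t + (T x y t - Ta) * T₁₁ x y t)) + ((-(1/2)) * ((dv₂ x y t * (T x y t - Ta) ^ 2 + v₂ x y t * (2 * ((T x y t - Ta) * T₂ x y t))) + (dv₁ x y t * (T x y t - Ta) ^ 2 + v₁ x y t * (2 * ((T x y t - Ta) * T₁ x y t)))) + ((-ε) * (T₁ x y t ^ 2 + T₂ x y t ^ 2) + ((1/2) * ((dv₁ x y t + dv₂ x y t) * (T x y t - Ta) ^ 2) + (A * ((T x y t - Ta) * (S x y t * rt γ (T x y t - Ta))) + (-(A * C)) * (T x y t - Ta) ^ 2)))))) = (∫ x in a₁..b₁, ∫ y in a₂..b₂, ε * ((T₂ x y t * T₂ x y t + (T x y t - Ta)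 * T₂₂ x y t) + (T₁ x y t * T₁ x y t + (T x y t - Ta) * T₁₁ x y t))) + (∫ x in a₁..b₁, ∫ y in a₂..b₂, ((-(1/2)) * ((dv₂ x y t * (T x y t - Ta) ^ 2 + v₂ x y t * (2 * ((T x y t - Ta) * T₂ x y t))) + (dv₁ x y t * (T x y t - Ta) ^ 2 + v₁ x y t * (2 * ((T x y t - Ta) * T₁ x y t)))) + ((-ε) * (T₁ x y t ^ 2 + T₂ x y t ^ 2) + ((1/2) * ((dv₁ x y t + dv₂ x y t) * (T x y t - Ta) ^ 2) + (A * ((T x y t - Ta) * (S x y t * rt γ (T x y t - Ta))) + (-(A * C)) * (T x y t - Ta) ^ 2))))) :=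
    add2 h1 h2 ((continuousOn_const.mul (cq1.add cq2))) crest1
  have s2 : (∫ x in a₁..b₁, ∫ y in a₂..b₂, ε * ((T₂ x y t * T₂ x y t + (T x y t - Ta) * T₂₂ x y t) + (T₁ x y t * T₁ x y t + (T x y t - Ta) * T₁₁ x y t))) = ε * (∫ x in a₁..b₁, ∫ y in a₂..b₂, ((T₂ x y t * T₂ x y t + (T x y t - Ta) * T₂₂ x y t) + (T₁ x y t * T₁ x y t + (T x y t - Ta) * T₁₁ x y t))) :=
    cmul2 ε (fun x y => (T₂ x y t * T₂ x y t + (T x y t - Ta) * T₂₂ x y t) + (T₁ x y t * T₁ x y t + (T x y t - Ta) * T₁₁ x y t))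
  have s3 : (∫ x in a₁..b₁, ∫ y in a₂..b₂, ((T₂ x y t * T₂ x y t + (T x y t - Ta) * T₂₂ x y t) + (T₁ x y t * T₁ x y t + (T x y t - Ta) * T₁₁ x y t))) = (∫ x in a₁..b₁, ∫ y in a₂..b₂, (T₂ x y t * T₂ x y t + (T x y t - Ta) * T₂₂ x y t)) + (∫ x in a₁..b₁, ∫ y in a₂..b₂, (T₁ x y t * T₁ x y t + (T x y t - Ta) * T₁₁ x y t)) := add2 h1 h2 cq1 cq2
  have s4 : (∫ x in a₁..b₁, ∫ y in a₂..b₂, ((-(1/2)) * ((dv₂ x y t * (T x y t - Ta) ^ 2 + v₂ x y t * (2 * ((T x y t - Ta) * T₂ x y t))) + (dv₁ x y t * (T x y t - Ta) ^ 2 + v₁ x y t * (2 * ((T x y t - Ta) * T₁ x y t)))) + ((-ε) * (T₁ x y t ^ 2 + T₂ x y t ^ 2) + ((1/2) * ((dv₁ x y t + dv₂ x y t) * (T x y t - Ta) ^ 2) + (A * ((T x y t - Ta) * (S x y t * rt γ (T x y t - Ta))) + (-(A * C)) * (T x y t - Ta) ^ 2))))) = (∫ x in a₁..b₁, ∫ y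 in a₂..b₂, (-(1/2)) * ((dv₂ x y t * (T x y t - Ta) ^ 2 + v₂ x y t * (2 * ((T x y t - Ta) * T₂ x y t))) + (dv₁ x y t * (T x y t - Ta) ^ 2 + v₁ x y t * (2 * ((T x y t - Ta) * T₁ x y t))))) + (∫ x in a₁..b₁, ∫ y in a₂..b₂, ((-ε) * (T₁ x y t ^ 2 + T₂ x y t ^ 2) + ((1/2) * ((dv₁ x y t + dv₂ x y t) * (T x y t - Ta) ^ 2) + (A * ((T x y t - Ta) * (S x y t * rt γ (T x y t - Ta))) + (-(A * C)) * (T x y t - Ta) ^ 2)))) :=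
    add2 h1 h2 (continuousOn_const.mul (cq3.add cq4)) crest2
  have s5 : (∫ x in a₁..b₁, ∫ y in a₂..b₂, (-(1/2)) * ((dv₂ x y t * (T x y t - Ta) ^ 2 + v₂ x y t * (2 * ((T x y t - Ta) * T₂ x y t))) + (dv₁ x y t * (T x y t - Ta) ^ 2 + v₁ x y t * (2 * ((T x y t - Ta) * T₁ x y t))))) = (-(1/2)) * ((∫ x in a₁..b₁, ∫ y in a₂..b₂, (dv₂ x y t * (T x y t - Ta) ^ 2 + v₂ x y t * (2 * ((T x y t - Ta) * T₂ x y t)))) + (∫ x in a₁..b₁, ∫ y in a₂..b₂, (dv₁ x y t * (T x y t - Ta) ^ 2 + v₁ x y t * (2 * ((T x y t - Ta) * T₁ x y t))))) := by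
    rw [cmul2 (-(1/2)) (fun x y => (dv₂ x y t * (T x y t - Ta) ^ 2 + v₂ x y t * (2 * ((T x y t - Ta) * T₂ x y t))) + (dv₁ x y t * (T x y t - Ta) ^ 2 + v₁ x y t * (2 * ((T x y t - Ta) * T₁ x y t)))), add2 h1 h2 cq3 cq4]
  have s6 : (∫ x in a₁..b₁, ∫ y in a₂..b₂, ((-ε) * (T₁ x y t ^ 2 + T₂ x y t ^ 2) + ((1/2) * ((dv₁ x y t + dv₂ x y t) * (T x y t - Ta) ^ 2) + (A * ((T x y t - Ta) * (S x y t * rt γ (T x y t - Ta))) + (-(A * C)) * (T x y t - Ta) ^ 2)))) = (-ε) * (∫ x in a₁..b₁, ∫ y in a₂..b₂, (T₁ x y t ^ 2 + T₂ x y t ^ 2)) + (∫ x in a₁..b₁, ∫ y in a₂..b₂, ((1/2) * ((dv₁ x y t + dv₂ x y t) * (T x y t - Ta) ^ 2) + (A * ((T x y t - Ta) * (S x y t * rt γ (T x y t - Ta))) + (-(A * C)) * (T x y t - Ta) ^ 2))) := by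
    rw [add2 h1 h2 (continuousOn_const.mul cq7) cr2, cmul2 (-ε) (fun x y => (T₁ x y t ^ 2 + T₂ x y t ^ 2))]
  -- bound on the reaction/divergence remainder
  have cwX : ContinuousOn (fun p : ℝ × ℝ => p.1 * (2 * ((T p.1 p.2 t - Ta) * T₁ p.1 p.2 t)))
      (Icc a₁ b₁ ×ˢ Icc a₂ b₂) :=
    (continuous_fst.continuousOn).mul (continuousOn_const.mul (cu.mul cT1))
  have cwY : ContinuousOn (fun p : ℝ × ℝ => p.2 * (2 * ((T p.1 p.2 t - Ta) * T₂ p.1 p.2 t)))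
      (Icc a₁ b₁ ×ˢ Icc a₂ b₂) :=
    (continuous_snd.continuousOn).mul (continuousOn_const.mul (cu.mul cT2))
  have bR2 : (∫ x in a₁..b₁, ∫ y in a₂..b₂, ((1/2) * ((dv₁ x y t + dv₂ x y t) * (T x y t - Ta) ^ 2) + (A * ((T x y t - Ta) * (S x y t * rt γ (T x y t - Ta))) + (-(A * C)) * (T x y t - Ta) ^ 2))) ≤ ((1/2) * Vs + A * (MS₀ * (Real.exp (-1) / γ)) - A * C) * (∫ x in a₁..b₁, ∫ y in a₂..b₂, (T x y t - Ta) ^ 2) := by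
    have m := mono2 h1 h2 (f := fun x y => ((1/2) * ((dv₁ x y t + dv₂ x y t) * (T x y t - Ta) ^ 2) + (A * ((T x y t - Ta) * (S x y t * rt γ (T x y t - Ta))) + (-(A * C)) * (T x y t - Ta) ^ 2)))
      (g := fun x y => ((1/2) * Vs + A * (MS₀ * (Real.exp (-1) / γ)) - A * C) * (T x y t - Ta) ^ 2) cr2
      (continuousOn_const.mul (cu.pow 2)) ?_
    · rw [cmul2 ((1/2) * Vs + A * (MS₀ * (Real.exp (-1) / γ)) - A * C) (fun x y => (T x y t - Ta) ^ 2)] at m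
      exact m
    · intro x hx y hy
      have hdv := hVle x y ⟨hx, hy⟩
      have hS₁ := (hSb x y ⟨hx, hy⟩ t ht0).1
      have hS₂ := hSle x y ⟨hx, hy⟩
      have hkey := rt_key (s := T x y t - Ta) hγ hS₁ hS₂
      linarith [mul_le_mul_of_nonneg_right hdv (sq_nonneg (T x y t - Ta)),
        mul_le_mul_of_nonneg_left hkey hA.le]
  -- Poincaré-type inequality
  have sX : (∫ x in a₁..b₁, ∫ y in a₂..b₂, ((T x y t - Ta) ^ 2 + (x * (2 * ((T x y t - Ta) * T₁ x y t))))) = (∫ x in a₁..b₁, ∫ y in a₂..b₂, (T x y t - Ta) ^ 2) + (∫ x in a₁..b₁, ∫ y in a₂..b₂, (x * (2 * ((T x y t - Ta) * T₁ x y t)))) :=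
    add2 h1 h2 (cu.pow 2) cwX
  have sY : (∫ x in a₁..b₁, ∫ y in a₂..b₂, ((T x y t - Ta) ^ 2 + (y * (2 * ((T x y t - Ta) * T₂ x y t))))) = (∫ x in a₁..b₁, ∫ y in a₂..b₂, (T x y t - Ta) ^ 2) + (∫ x in a₁..b₁, ∫ y in a₂..b₂, (y * (2 * ((T x y t - Ta) * T₂ x y t)))) :=
    add2 h1 h2 (cu.pow 2) cwY
  have bW2 : -((∫ x in a₁..b₁, ∫ y in a₂..b₂, (x * (2 * ((T x y t - Ta) * T₁ x y t)))) + (∫ x in a₁..b₁, ∫ y in a₂..b₂, (y * (2 * ((T x y t - Ta) * T₂ x y t))))) ≤ (∫ x in a₁..b₁, ∫ y in a₂..b₂, (T x y t - Ta) ^ 2) + R₁ * (∫ x in a₁..b₁, ∫ y in a₂..b₂, (T₁ x y t ^ 2 + T₂ x y t ^ 2)) := by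
    have m := mono2 h1 h2 (f := fun x y => -((x * (2 * ((T x y t - Ta) * T₁ x y t))) + (y * (2 * ((T x y t - Ta) * T₂ x y t)))))
      (g := fun x y => (T x y t - Ta) ^ 2 + R₁ * (T₁ x y t ^ 2 + T₂ x y t ^ 2)) ((cwX.add cwY).neg)
      ((cu.pow 2).add (continuousOn_const.mul cq7)) ?_
    · rw [neg2 (fun x y => (x * (2 * ((T x y t - Ta) * T₁ x y t))) + (y * (2 * ((T x y t - Ta) * T₂ x y t)))), add2 h1 h2 cwX cwY,
        add2 h1 h2 (cu.pow 2) (continuousOn_const.mul cq7),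
        cmul2 R₁ (fun x y => (T₁ x y t ^ 2 + T₂ x y t ^ 2))] at m
      exact m
    · intro x hx y hy
      have hr := hR₁le (x, y) ⟨hx, hy⟩
      simp only at hr
      linarith [sq_nonneg ((T x y t - Ta) + (x * T₁ x y t + y * T₂ x y t)),
        sq_nonneg (x * T₂ x y t - y * T₁ x y t),
        mul_le_mul_of_nonneg_right hr
          (add_nonneg (sq_nonneg (T₁ x y t)) (sq_nonneg (T₂ x y t)))]
  -- edge bounds
  have eb1 : (∫ y in a₂..b₂, b₁ * (T b₁ y t - Ta) ^ 2)
      ≤ R₂ * ∫ y in a₂..b₂, (T b₁ y t - Ta) ^ 2 := by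
    have m : (∫ y in a₂..b₂, b₁ * (T b₁ y t - Ta) ^ 2)
        ≤ ∫ y in a₂..b₂, R₂ * (T b₁ y t - Ta) ^ 2 :=
      intervalIntegral.integral_mono_on h2
        ((continuousOn_const.mul ((cTyb1.sub continuousOn_const).pow 2)).intervalIntegrable_of_Icc h2)
        ((continuousOn_const.mul ((cTyb1.sub continuousOn_const).pow 2)).intervalIntegrable_of_Icc h2)
        (fun y _ => mul_le_mul_of_nonneg_right hb₁R (sq_nonneg (T b₁ y t - Ta)))
    rwa [intervalIntegral.integral_const_mul R₂] at m
  have eb2 : -(∫ y in a₂..b₂, a₁ * (T a₁ y t - Ta) ^ 2)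
      ≤ R₂ * ∫ y in a₂..b₂, (T a₁ y t - Ta) ^ 2 := by
    rw [← intervalIntegral.integral_neg]
    have m : (∫ y in a₂..b₂, -(a₁ * (T a₁ y t - Ta) ^ 2))
        ≤ ∫ y in a₂..b₂, R₂ * (T a₁ y t - Ta) ^ 2 := by
      apply intervalIntegral.integral_mono_on h2
        (((continuousOn_const.mul ((cTya1.sub continuousOn_const).pow 2)).neg).intervalIntegrable_of_Icc h2)
        ((continuousOn_const.mul ((cTya1.sub continuousOn_const).pow 2)).intervalIntegrable_of_Icc h2)
      exact fun y _ => by simp only [Pi.mul_apply, Pi.neg_apply, Pi.sub_apply, Pi.pow_apply]; linarith [mul_le_mul_of_nonneg_right ha₁R (sq_nonneg (T a₁ y t - Ta))]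
    rwa [intervalIntegral.integral_const_mul R₂] at m
  have eb3 : (∫ x in a₁..b₁, b₂ * (T x b₂ t - Ta) ^ 2)
      ≤ R₂ * ∫ x in a₁..b₁, (T x b₂ t - Ta) ^ 2 := by
    have m : (∫ x in a₁..b₁, b₂ * (T x b₂ t - Ta) ^ 2)
        ≤ ∫ x in a₁..b₁, R₂ * (T x b₂ t - Ta) ^ 2 :=
      intervalIntegral.integral_mono_on h1
        ((continuousOn_const.mul ((cTxb2.sub continuousOn_const).pow 2)).intervalIntegrable_of_Icc h1)
        ((continuousOn_const.mul ((cTxb2.sub continuousOn_const).pow 2)).intervalIntegrable_of_Icc h1)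
        (fun x _ => mul_le_mul_of_nonneg_right hb₂R (sq_nonneg (T x b₂ t - Ta)))
    rwa [intervalIntegral.integral_const_mul R₂] at m
  have eb4 : -(∫ x in a₁..b₁, a₂ * (T x a₂ t - Ta) ^ 2)
      ≤ R₂ * ∫ x in a₁..b₁, (T x a₂ t - Ta) ^ 2 := by
    rw [← intervalIntegral.integral_neg]
    have m : (∫ x in a₁..b₁, -(a₂ * (T x a₂ t - Ta) ^ 2))
        ≤ ∫ x in a₁..b₁, R₂ * (T x a₂ t - Ta) ^ 2 := by
      apply intervalIntegral.integral_mono_on h1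
        (((continuousOn_const.mul ((cTxa2.sub continuousOn_const).pow 2)).neg).intervalIntegrable_of_Icc h1)
        ((continuousOn_const.mul ((cTxa2.sub continuousOn_const).pow 2)).intervalIntegrable_of_Icc h1)
      exact fun x _ => by simp only [Pi.mul_apply, Pi.neg_apply, Pi.sub_apply, Pi.pow_apply]; linarith [mul_le_mul_of_nonneg_right ha₂R (sq_nonneg (T x a₂ t - Ta))]
    rwa [intervalIntegral.integral_const_mul R₂] at m
  -- nonnegativity of the boundary square integrals
  have sn1 : 0 ≤ ∫ y in a₂..b₂, (T a₁ y t - Ta) ^ 2 :=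
    intervalIntegral.integral_nonneg h2 (fun y _ => sq_nonneg _)
  have sn2 : 0 ≤ ∫ y in a₂..b₂, (T b₁ y t - Ta) ^ 2 :=
    intervalIntegral.integral_nonneg h2 (fun y _ => sq_nonneg _)
  have sn3 : 0 ≤ ∫ x in a₁..b₁, (T x a₂ t - Ta) ^ 2 :=
    intervalIntegral.integral_nonneg h1 (fun x _ => sq_nonneg _)
  have sn4 : 0 ≤ ∫ x in a₁..b₁, (T x b₂ t - Ta) ^ 2 :=
    intervalIntegral.integral_nonneg h1 (fun x _ => sq_nonneg _)
  -- Poincaré-type conclusion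
  have hNb : (∫ x in a₁..b₁, ∫ y in a₂..b₂, (T x y t - Ta) ^ 2) ≤ R₂ * ((∫ y in a₂..b₂, (T a₁ y t - Ta) ^ 2) + (∫ y in a₂..b₂, (T b₁ y t - Ta) ^ 2) + (∫ x in a₁..b₁, (T x a₂ t - Ta) ^ 2) + (∫ x in a₁..b₁, (T x b₂ t - Ta) ^ 2)) + R₁ * (∫ x in a₁..b₁, ∫ y in a₂..b₂, (T₁ x y t ^ 2 + T₂ x y t ^ 2)) := by
    linarith [sX, sY, hGX, hGY, bW2, eb1, eb2, eb3, eb4]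
  have hdd : ((∫ x in a₁..b₁, ∫ y in a₂..b₂, (T x y t - Ta) ^ 2) - R₂ * ((∫ y in a₂..b₂, (T a₁ y t - Ta) ^ 2) + (∫ y in a₂..b₂, (T b₁ y t - Ta) ^ 2) + (∫ x in a₁..b₁, (T x a₂ t - Ta) ^ 2) + (∫ x in a₁..b₁, (T x b₂ t - Ta) ^ 2))) / R₁ ≤ (∫ x in a₁..b₁, ∫ y in a₂..b₂, (T₁ x y t ^ 2 + T₂ x y t ^ 2)) :=
    (div_le_iff₀ hR₁pos).2 (by linarith [hNb])
  have hdd2 := mul_le_mul_of_nonneg_left hdd hε.le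
  have e5 : ε * (((∫ x in a₁..b₁, ∫ y in a₂..b₂, (T x y t - Ta) ^ 2) - R₂ * ((∫ y in a₂..b₂, (T a₁ y t - Ta) ^ 2) + (∫ y in a₂..b₂, (T b₁ y t - Ta) ^ 2) + (∫ x in a₁..b₁, (T x a₂ t - Ta) ^ 2) + (∫ x in a₁..b₁, (T x b₂ t - Ta) ^ 2))) / R₁)
      = ε * (∫ x in a₁..b₁, ∫ y in a₂..b₂, (T x y t - Ta) ^ 2) * R₁⁻¹ - ε * R₂ * ((∫ y in a₂..b₂, (T a₁ y t - Ta) ^ 2) + (∫ y in a₂..b₂, (T b₁ y t - Ta) ^ 2) + (∫ x in a₁..b₁, (T x a₂ t - Ta) ^ 2) + (∫ x in a₁..b₁, (T x b₂ t - Ta) ^ 2)) * R₁⁻¹ := by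
    rw [div_eq_mul_inv]; ring
  have e6 : -α * (1 / 2 * (∫ x in a₁..b₁, ∫ y in a₂..b₂, (T x y t - Ta) ^ 2))
      = (-(A * C)) * (∫ x in a₁..b₁, ∫ y in a₂..b₂, (T x y t - Ta) ^ 2) - ε * (∫ x in a₁..b₁, ∫ y in a₂..b₂, (T x y t - Ta) ^ 2) * R₁⁻¹
        + (1/2) * Vs * (∫ x in a₁..b₁, ∫ y in a₂..b₂, (T x y t - Ta) ^ 2) + A * (MS₀ * (Real.exp (-1) / γ)) * (∫ x in a₁..b₁, ∫ y in a₂..b₂, (T x y t - Ta) ^ 2) := by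
    rw [hα]
    field_simp
    ring
  have e7 : 2 * ε * (R₂ / R₁) * ((∫ y in a₂..b₂, (T a₁ y t - Ta) ^ 2) + (∫ y in a₂..b₂, (T b₁ y t - Ta) ^ 2) + (∫ x in a₁..b₁, (T x a₂ t - Ta) ^ 2) + (∫ x in a₁..b₁, (T x b₂ t - Ta) ^ 2)) = 2 * (ε * R₂ * ((∫ y in a₂..b₂, (T a₁ y t - Ta) ^ 2) + (∫ y in a₂..b₂, (T b₁ y t - Ta) ^ 2) + (∫ x in a₁..b₁, (T x a₂ t - Ta) ^ 2) + (∫ x in a₁..b₁, (T x b₂ t - Ta) ^ 2)) * R₁⁻¹) := by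
    rw [div_eq_mul_inv]; ring
  have e8 : 0 ≤ ε * R₂ * ((∫ y in a₂..b₂, (T a₁ y t - Ta) ^ 2) + (∫ y in a₂..b₂, (T b₁ y t - Ta) ^ 2) + (∫ x in a₁..b₁, (T x a₂ t - Ta) ^ 2) + (∫ x in a₁..b₁, (T x b₂ t - Ta) ^ 2)) * R₁⁻¹ :=
    mul_nonneg (mul_nonneg (mul_nonneg hε.le hR₂0) (by linarith)) (inv_nonneg.2 hR₁pos.le)
  have hDeq : (∫ x in a₁..b₁, ∫ y in a₂..b₂, (T x y t - Ta) * Tt x y t)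
      = ε * (((∫ x in a₁..b₁, κ x b₂ t * (T x b₂ t - Ta))
            + ∫ x in a₁..b₁, κ x a₂ t * (T x a₂ t - Ta))
          + ((∫ y in a₂..b₂, κ b₁ y t * (T b₁ y t - Ta))
            + ∫ y in a₂..b₂, κ a₁ y t * (T a₁ y t - Ta)))
        + ((-(1/2)) * (((∫ x in a₁..b₁, v₂ x b₂ t * (T x b₂ t - Ta) ^ 2)
              - ∫ x in a₁..b₁, v₂ x a₂ t * (T x a₂ t - Ta) ^ 2)
            + ((∫ y in a₂..b₂, v₁ b₁ y t * (T b₁ y t - Ta) ^ 2)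
              - ∫ y in a₂..b₂, v₁ a₁ y t * (T a₁ y t - Ta) ^ 2))
          + ((-ε) * (∫ x in a₁..b₁, ∫ y in a₂..b₂, (T₁ x y t ^ 2 + T₂ x y t ^ 2)) + (∫ x in a₁..b₁, ∫ y in a₂..b₂, ((1/2) * ((dv₁ x y t + dv₂ x y t) * (T x y t - Ta) ^ 2) + (A * ((T x y t - Ta) * (S x y t * rt γ (T x y t - Ta))) + (-(A * C)) * (T x y t - Ta) ^ 2))))) := by
    rw [hPDEq, s1, s2, s3, s4, s5, s6, hJ1κ, hJ2κ, hJ3, hJ4]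
  simp only [bInt]
  linarith [hDeq, bR2, hdd2, e5, e6, e7, e8]

set_option maxHeartbeats 1000000 in
/-- Energy estimate for the wildfire model on the rectangle `W = [a₁,b₁]×[a₂,b₂]`
under a general Neumann boundary control `∂T/∂n = κ` on `∂W`:
`B′(t) ≤ −α·B(t) + ε·∫_{∂W} κ·T̃ dσ − ½·∫_{∂W}(n·v)·T̃² dσ + 2ε·(R₂/R₁)·∫_{∂W} T̃² dσ`. -/
theorem stmt8
    (a₁ b₁ a₂ b₂ ε A C γ Ta CS : ℝ)
    (ha : a₁ < b₁) (hb : a₂ < b₂)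
    (hε : 0 < ε) (hA : 0 < A) (hC : 0 < C) (hγ : 0 < γ) (hTa : 0 < Ta) (hCS : 0 ≤ CS)
    (W bW : Set (ℝ × ℝ))
    (hW : W = Icc a₁ b₁ ×ˢ Icc a₂ b₂)
    (hbW : bW = (({a₁, b₁} : Set ℝ) ×ˢ Icc a₂ b₂) ∪ (Icc a₁ b₁ ×ˢ ({a₂, b₂} : Set ℝ)))
    (T S v₁ v₂ T₁ T₂ T₁₁ T₂₂ Tt dv₁ dv₂ : ℝ → ℝ → ℝ → ℝ)
    (T₀ S₀ : ℝ → ℝ → ℝ)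
    -- spatial and temporal derivatives of T and spatial derivatives of v
    (hT₁ : ∀ x y t, 0 ≤ t → HasDerivAt (fun s => T s y t) (T₁ x y t) x)
    (hT₂ : ∀ x y t, 0 ≤ t → HasDerivAt (fun s => T x s t) (T₂ x y t) y)
    (hT₁₁ : ∀ x y t, 0 ≤ t → HasDerivAt (fun s => T₁ s y t) (T₁₁ x y t) x)
    (hT₂₂ : ∀ x y t, 0 ≤ t → HasDerivAt (fun s => T₂ x s t) (T₂₂ x y t) y)
    (hTt : ∀ x y t, 0 < t → HasDerivAt (fun τ => T x y τ) (Tt x y t) t)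
    (hdv₁ : ∀ x y t, 0 ≤ t → HasDerivAt (fun s => v₁ s y t) (dv₁ x y t) x)
    (hdv₂ : ∀ x y t, 0 ≤ t → HasDerivAt (fun s => v₂ x s t) (dv₂ x y t) y)
    -- joint continuity on W × [0,∞) of T, S, v and all the above derivatives
    (hcont : ∀ f ∈ [T, S, v₁, v₂, T₁, T₂, T₁₁, T₂₂, Tt, dv₁, dv₂],
      ContinuousOn (fun q : (ℝ × ℝ) × ℝ => f q.1.1 q.1.2 q.2) (W ×ˢ Ici (0 : ℝ)))
    -- the PDEs on W × (0,∞)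
    (hPDE : ∀ x y, (x, y) ∈ W → ∀ t, 0 < t →
      Tt x y t = ε * (T₁₁ x y t + T₂₂ x y t)
        - (v₁ x y t * T₁ x y t + v₂ x y t * T₂ x y t)
        + A * (S x y t * rt γ (T x y t - Ta) - C * (T x y t - Ta)))
    (hSdot : ∀ x y, (x, y) ∈ W → ∀ t, 0 < t →
      HasDerivAt (fun τ => S x y τ) (-CS * S x y t * rt γ (T x y t - Ta)) t)
    -- initial data
    (hT0 : ∀ x y, T x y 0 = T₀ x y) (hS0 : ∀ x y, S x y 0 = S₀ x y)
    (hS0b : ∀ x y, (x, y) ∈ W → 0 ≤ S₀ x y ∧ S₀ x y ≤ 1)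
    -- fuel bound: 0 ≤ S(x,t) ≤ S₀(x) on W × [0,∞)
    (hSb : ∀ x y, (x, y) ∈ W → ∀ t, 0 ≤ t → 0 ≤ S x y t ∧ S x y t ≤ S₀ x y)
    -- the constants R₁, R₂, 𝒱, sup S₀, α and the energy B
    (R₁ R₂ Vs MS₀ α : ℝ) (B : ℝ → ℝ)
    (hR₁ : R₁ = sSup ((fun p : ℝ × ℝ => p.1 ^ 2 + p.2 ^ 2) '' W))
    (hR₂ : R₂ = sSup ((fun p : ℝ × ℝ => Real.sqrt (p.1 ^ 2 + p.2 ^ 2)) '' bW))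
    (hVs : Vs = sSup ((fun q : (ℝ × ℝ) × ℝ =>
      |dv₁ q.1.1 q.1.2 q.2 + dv₂ q.1.1 q.1.2 q.2|) '' (W ×ˢ Ioi (0 : ℝ))))
    (hVbdd : BddAbove ((fun q : (ℝ × ℝ) × ℝ =>
      |dv₁ q.1.1 q.1.2 q.2 + dv₂ q.1.1 q.1.2 q.2|) '' (W ×ˢ Ioi (0 : ℝ))))
    (hMS₀ : MS₀ = sSup ((fun p : ℝ × ℝ => S₀ p.1 p.2) '' W))
    (hα : α = 2 * A * C + 2 * ε / R₁ - Vs - (2 * A * Real.exp (-1) / γ) * MS₀)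
    (hB : B = fun t => (1 / 2) * ∫ x in a₁..b₁, ∫ y in a₂..b₂, (T x y t - Ta) ^ 2)
    -- the boundary control κ, continuous on ∂W × (0,∞)
    (κ : ℝ → ℝ → ℝ → ℝ)
    (hκcont : ContinuousOn (fun q : (ℝ × ℝ) × ℝ => κ q.1.1 q.1.2 q.2) (bW ×ˢ Ioi (0 : ℝ)))
    -- the boundary condition ∂T/∂n = κ on each edge of ∂W, for t > 0
    (hbcl : ∀ y ∈ Icc a₂ b₂, ∀ t, 0 < t → -T₁ a₁ y t = κ a₁ y t)
    (hbcr : ∀ y ∈ Icc a₂ b₂, ∀ t, 0 < t → T₁ b₁ y t = κ b₁ y t)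
    (hbcb : ∀ x ∈ Icc a₁ b₁, ∀ t, 0 < t → -T₂ x a₂ t = κ x a₂ t)
    (hbct : ∀ x ∈ Icc a₁ b₁, ∀ t, 0 < t → T₂ x b₂ t = κ x b₂ t) :
    ∃ B' : ℝ → ℝ, ∀ t, 0 < t → HasDerivAt B (B' t) t ∧
      B' t ≤ -α * B t
        + ε * bInt a₁ b₁ a₂ b₂ (fun x y => κ x y t * (T x y t - Ta))
        - (1 / 2) * ((∫ y in a₂..b₂, v₁ b₁ y t * (T b₁ y t - Ta) ^ 2)
            - (∫ y in a₂..b₂, v₁ a₁ y t * (T a₁ y t - Ta) ^ 2)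
            + (∫ x in a₁..b₁, v₂ x b₂ t * (T x b₂ t - Ta) ^ 2)
            - (∫ x in a₁..b₁, v₂ x a₂ t * (T x a₂ t - Ta) ^ 2))
        + 2 * ε * (R₂ / R₁) * bInt a₁ b₁ a₂ b₂ (fun x y => (T x y t - Ta) ^ 2) := by
  subst hW hbW hB
  refine ⟨fun t => ∫ x in a₁..b₁, ∫ y in a₂..b₂, (T x y t - Ta) * Tt x y t,
    fun t ht => ⟨?_, ?_⟩⟩
  · have hd := deriv_outer (Ta := Ta) ha.le hb.le hTt (hcont T (by simp)) (hcont Tt (by simp)) ht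
    have h := HasDerivAt.const_mul (1/2 : ℝ) hd
    have hval : (1/2 : ℝ) * (∫ x in a₁..b₁, ∫ y in a₂..b₂, 2*((T x y t - Ta) * Tt x y t))
        = ∫ x in a₁..b₁, ∫ y in a₂..b₂, (T x y t - Ta) * Tt x y t := by
      rw [cmul2 2 (fun x y => (T x y t - Ta) * Tt x y t)]; ring
    rw [hval] at h
    exact h
  · exact key_ineq a₁ b₁ a₂ b₂ ε A C γ Ta ha hb hε hA hC hγ T S v₁ v₂ T₁ T₂ T₁₁ T₂₂ Tt
      dv₁ dv₂ S₀ hT₁ hT₂ hT₁₁ hT₂₂ hdv₁ hdv₂ hcont hPDE hS0b hSb R₁ R₂ Vs MS₀ α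
      hR₁ hR₂ hVs hVbdd hMS₀ hα κ hbcl hbcr hbcb hbct t ht
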